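/- arXiv:1606.00639 — 4 statements merged into one kernel-verified Lean document; each statement's English description precedes it below -/
import Mathlib

section
/- Shift of the conserved quantity: for every z ∈ Ω and every j ∈ ℤ, the shifted configuration τ^j z lies in Ω and N(τ^j z) = N(z) − j·(ω^max − ω^min). -/
/- Configurations `z : ℤ → {ω^min, …, ω^max}` of a misanthrope-type process, with
`z_i = ω^min` for all but finitely many `i ≤ 0` and `z_i = ω^max` for all but finitely
many `i ≥ 1`. -/

/-- Membership in the state space `Ω`. -/
def inOmegaGen (ωmin ωmax : ℤ) (z : ℤ → ℤ) : Prop :=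
  (∀ i, ωmin ≤ z i ∧ z i ≤ ωmax) ∧
    {i : ℤ | i ≤ 0 ∧ z i ≠ ωmin}.Finite ∧ {i : ℤ | 1 ≤ i ∧ z i ≠ ωmax}.Finite

/-- The conserved quantity `N(z) = ∑_{i ≥ 1} (ω^max - z_i) - ∑_{i ≤ 0} (z_i - ω^min)`. -/
noncomputable def Ngen (ωmin ωmax : ℤ) (z : ℤ → ℤ) : ℤ :=
  (∑ᶠ i ∈ {i : ℤ | 1 ≤ i}, (ωmax - z i)) - ∑ᶠ i ∈ {i : ℤ | i ≤ 0}, (z i - ωmin)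

lemma inOmega_shift (ωmin ωmax : ℤ) (z : ℤ → ℤ) (hz : inOmegaGen ωmin ωmax z) (j : ℤ) :
    inOmegaGen ωmin ωmax (fun i => z (i + j)) := by
  obtain ⟨hb, hfin1, hfin2⟩ := hz
  refine ⟨fun i => hb (i + j), ?_, ?_⟩
  · have hT : ({k : ℤ | k ≤ 0 ∧ z k ≠ ωmin} ∪ Set.Icc (min j 0 + 1) (max j 0)).Finite :=
      hfin1.union (Set.finite_Icc _ _)
    have hsub : {i : ℤ | i ≤ 0 ∧ z (i + j) ≠ ωmin} ⊆
        (fun i => i + j) ⁻¹' ({k : ℤ | k ≤ 0 ∧ z k ≠ ωmin} ∪ Set.Icc (min j 0 + 1) (max j 0)) := by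
      rintro i ⟨hi, hzi⟩
      simp only [Set.mem_preimage, Set.mem_union, Set.mem_setOf_eq, Set.mem_Icc]
      by_cases h : i + j ≤ 0
      · exact Or.inl ⟨h, hzi⟩
      · right; omega
    exact (hT.preimage ((add_left_injective j).injOn)).subset hsub
  · have hT : ({k : ℤ | 1 ≤ k ∧ z k ≠ ωmax} ∪ Set.Icc (min j 0 + 1) (max j 0)).Finite :=
      hfin2.union (Set.finite_Icc _ _)
    have hsub : {i : ℤ | 1 ≤ i ∧ z (i + j) ≠ ωmax} ⊆
        (fun i => i + j) ⁻¹' ({k : ℤ | 1 ≤ k ∧ z k ≠ ωmax} ∪ Set.Icc (min j 0 + 1) (max j 0)) := by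
      rintro i ⟨hi, hzi⟩
      simp only [Set.mem_preimage, Set.mem_union, Set.mem_setOf_eq, Set.mem_Icc]
      by_cases h : 1 ≤ i + j
      · exact Or.inl ⟨h, hzi⟩
      · right; omega
    exact (hT.preimage ((add_left_injective j).injOn)).subset hsub

lemma Ngen_shift_one (ωmin ωmax : ℤ) (z : ℤ → ℤ) (hz : inOmegaGen ωmin ωmax z) :
    Ngen ωmin ωmax (fun i => z (i + 1)) = Ngen ωmin ωmax z - (ωmax - ωmin) := by
  obtain ⟨hb, hfin1, hfin2⟩ := hz
  have himgA : (fun i => i + 1) '' {i : ℤ | 1 ≤ i} = {i : ℤ | 2 ≤ i} := by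
    ext k
    simp only [Set.mem_image, Set.mem_setOf_eq]
    constructor
    · rintro ⟨x, hx, rfl⟩; omega
    · intro h; exact ⟨k - 1, by omega, by omega⟩
  have hA : (∑ᶠ i ∈ {i : ℤ | 2 ≤ i}, (ωmax - z i))
      = ∑ᶠ i ∈ {i : ℤ | 1 ≤ i}, (ωmax - z (i + 1)) := by
    rw [← himgA, finsum_mem_image (f := fun i => ωmax - z i) ((add_left_injective 1).injOn)]
  have hsupA : ({i : ℤ | 2 ≤ i} ∩ Function.support (fun i => ωmax - z i)).Finite := by
    apply hfin2.subset
    intro i hi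
    simp only [Set.mem_inter_iff, Set.mem_setOf_eq, Function.mem_support] at hi
    exact ⟨by omega, fun h => hi.2 (by rw [h]; ring)⟩
  have hins1 : ({i : ℤ | 1 ≤ i} : Set ℤ) = insert 1 {i : ℤ | 2 ≤ i} := by
    ext k; simp only [Set.mem_setOf_eq, Set.mem_insert_iff]; omega
  have hA2 : (∑ᶠ i ∈ {i : ℤ | 1 ≤ i}, (ωmax - z i))
      = (ωmax - z 1) + ∑ᶠ i ∈ {i : ℤ | 2 ≤ i}, (ωmax - z i) := by
    rw [hins1, finsum_mem_insert' _ (by norm_num) hsupA]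
  have himgB : (fun i => i + 1) '' {i : ℤ | i ≤ 0} = {i : ℤ | i ≤ 1} := by
    ext k
    simp only [Set.mem_image, Set.mem_setOf_eq]
    constructor
    · rintro ⟨x, hx, rfl⟩; omega
    · intro h; exact ⟨k - 1, by omega, by omega⟩
  have hB : (∑ᶠ i ∈ {i : ℤ | i ≤ 1}, (z i - ωmin))
      = ∑ᶠ i ∈ {i : ℤ | i ≤ 0}, (z (i + 1) - ωmin) := by
    rw [← himgB, finsum_mem_image (f := fun i => z i - ωmin) ((add_left_injective 1).injOn)]
  have hsupB : ({i : ℤ | i ≤ 0} ∩ Function.support (fun i => z i - ωmin)).Finite := by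
    apply hfin1.subset
    intro i hi
    simp only [Set.mem_inter_iff, Set.mem_setOf_eq, Function.mem_support] at hi
    exact ⟨hi.1, fun h => hi.2 (by rw [h]; ring)⟩
  have hins2 : ({i : ℤ | i ≤ 1} : Set ℤ) = insert 1 {i : ℤ | i ≤ 0} := by
    ext k; simp only [Set.mem_setOf_eq, Set.mem_insert_iff]; omega
  have hB2 : (∑ᶠ i ∈ {i : ℤ | i ≤ 1}, (z i - ωmin))
      = (z 1 - ωmin) + ∑ᶠ i ∈ {i : ℤ | i ≤ 0}, (z i - ωmin) := by
    rw [hins2, finsum_mem_insert' _ (by norm_num) hsupB]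
  simp only [Ngen]
  omega

/-- Shift of the conserved quantity: for every `z ∈ Ω` and `j ∈ ℤ`, the shifted
configuration `(τ^j z)_i = z_{i+j}` lies in `Ω` and
`N(τ^j z) = N(z) - j (ω^max - ω^min)`. -/
theorem Ngen_shift (ωmin ωmax : ℤ) (hω : ωmin < ωmax) (z : ℤ → ℤ)
    (hz : inOmegaGen ωmin ωmax z) (j : ℤ) :
    inOmegaGen ωmin ωmax (fun i => z (i + j)) ∧
      Ngen ωmin ωmax (fun i => z (i + j)) = Ngen ωmin ωmax z - j * (ωmax - ωmin) := by
  refine ⟨inOmega_shift ωmin ωmax z hz j, ?_⟩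
  induction j using Int.induction_on with
  | zero => simp [Ngen]
  | succ k ih =>
    have hw := inOmega_shift ωmin ωmax z hz k
    have h1 := Ngen_shift_one ωmin ωmax _ hw
    have he : (fun i => z (i + 1 + (k : ℤ))) = (fun i => z (i + ((k : ℤ) + 1))) := by
      funext i; congr 1; ring
    rw [he] at h1
    rw [h1, ih]; ring
  | pred k ih =>
    have hw := inOmega_shift ωmin ωmax z hz (-(k : ℤ) - 1)
    have h1 := Ngen_shift_one ωmin ωmax _ hw
    have he : (fun i => z (i + 1 + (-(k : ℤ) - 1))) = (fun i => z (i + -(k : ℤ))) := by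
      funext i; congr 1; ring
    rw [he] at h1
    linear_combination ih - h1
end

section
/- Detailed balance (reversibility) of the ASEP blocking measure: for every η ∈ H and i ∈ ℤ with η_i = 1 and η_{i+1} = 0, letting η′ be the configuration equal to η except that η′_i = 0 and η′_{i+1} = 1, one has η′ ∈ H and p · w^c(η) = q · w^c(η′). -/
/- ASEP configurations are functions `η : ℤ → {0,1}`, encoded as `η : ℤ → ℕ` with
values at most `1`. Throughout, `p ∈ (1/2, 1)` is the right jump rate, `q = 1 - p`,
and `c ∈ ℝ` parametrizes the blocking measure. -/

/-- `N_p(η) = ∑_{i ≤ 0} η_i`. -/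
noncomputable def exNp (η : ℤ → ℕ) : ℕ := ∑ᶠ m ∈ {m : ℤ | m ≤ 0}, η m

/-- `N_h(η) = ∑_{i ≥ 1} (1 - η_i)`. -/
noncomputable def exNh (η : ℤ → ℕ) : ℕ := ∑ᶠ m ∈ {m : ℤ | 1 ≤ m}, (1 - η m)

/-- Membership in `H`: a `{0,1}`-valued configuration with `N_p(η) < ∞` and `N_h(η) < ∞`. -/
def memH (η : ℤ → ℕ) : Prop :=
  (∀ m, η m ≤ 1) ∧ {m : ℤ | m ≤ 0 ∧ η m = 1}.Finite ∧ {m : ℤ | 1 ≤ m ∧ η m = 0}.Finite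

/-- The conserved quantity `N(η) = N_h(η) - N_p(η)`. -/
noncomputable def exN (η : ℤ → ℕ) : ℤ := (exNh η : ℤ) - (exNp η : ℤ)

/-- The Bernoulli parameter `ρ_i = e^c (p/q)^i / (1 + e^c (p/q)^i)`, with `q = 1 - p`. -/
noncomputable def rho (p c : ℝ) (i : ℤ) : ℝ :=
  Real.exp c * (p / (1 - p)) ^ i / (1 + Real.exp c * (p / (1 - p)) ^ i)

/-- The `i`-th factor of the blocking weight: `ρ_i` if `η_i = 1`, else `1 - ρ_i`. -/
noncomputable def wFactor (p c : ℝ) (η : ℤ → ℕ) (i : ℤ) : ℝ :=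
  if η i = 1 then rho p c i else 1 - rho p c i

/-- The blocking weight `w^c(η) = ∏_{i ∈ ℤ} (ρ_i if η_i = 1 else 1 - ρ_i)`. -/
noncomputable def wBlock (p c : ℝ) (η : ℤ → ℕ) : ℝ := ∏' i : ℤ, wFactor p c η i

/-! ### Auxiliary definitions and lemmas -/

/-- The quantity `t_j = e^c (p/q)^j`. -/
noncomputable def tpar (p c : ℝ) (j : ℤ) : ℝ := Real.exp c * (p / (1 - p)) ^ j

/-- The ground-state configuration: holes at `m ≤ 0`, particles at `m ≥ 1`. -/
noncomputable def ground : ℤ → ℕ := fun m => if 1 ≤ m then 1 else 0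

section
variable {p c : ℝ} (hp : 1 / 2 < p) (hp1 : p < 1)
include hp hp1

lemma r_pos : 0 < p / (1 - p) := div_pos (by linarith) (by linarith)
lemma r_gt_one : 1 < p / (1 - p) := (one_lt_div (by linarith)).mpr (by linarith)

lemma tpar_pos (j : ℤ) : 0 < tpar p c j :=
  mul_pos (Real.exp_pos c) (zpow_pos (r_pos hp hp1) j)

omit hp hp1 in
lemma rho_eq_t (j : ℤ) : rho p c j = tpar p c j / (1 + tpar p c j) := rfl

lemma one_add_t_pos (j : ℤ) : 0 < 1 + tpar p c j := by
  have := tpar_pos (c := c) hp hp1 j; linarith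

lemma rho_pos (j : ℤ) : 0 < rho p c j :=
  div_pos (tpar_pos hp hp1 j) (one_add_t_pos hp hp1 j)

lemma rho_lt_one (j : ℤ) : rho p c j < 1 := by
  rw [rho_eq_t]
  rw [div_lt_one (one_add_t_pos hp hp1 j)]
  linarith

lemma one_sub_rho (j : ℤ) : 1 - rho p c j = 1 / (1 + tpar p c j) := by
  have h := (one_add_t_pos (c := c) hp hp1 j).ne'
  rw [rho_eq_t]; field_simp; ring

lemma rho_div_one_sub (j : ℤ) : rho p c j / (1 - rho p c j) = tpar p c j := by
  have h := (one_add_t_pos (c := c) hp hp1 j).ne'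
  rw [rho_eq_t]
  field_simp
  ring

lemma one_sub_rho_div (j : ℤ) : (1 - rho p c j) / rho p c j = (tpar p c j)⁻¹ := by
  have h := (one_add_t_pos (c := c) hp hp1 j).ne'
  have ht := (tpar_pos (c := c) hp hp1 j).ne'
  rw [rho_eq_t]
  field_simp
  ring

lemma abs_log_rho_le (j : ℤ) : |Real.log (rho p c j)| ≤ (tpar p c j)⁻¹ := by
  have h0 := rho_pos (c := c) hp hp1 j
  have h1 := rho_lt_one (c := c) hp hp1 j
  have ht := tpar_pos (c := c) hp hp1 j
  have h2 : Real.log (rho p c j) ≤ 0 := Real.log_nonpos h0.le h1.le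
  rw [abs_of_nonpos h2, ← Real.log_inv]
  have h3 : Real.log (rho p c j)⁻¹ ≤ (rho p c j)⁻¹ - 1 :=
    Real.log_le_sub_one_of_pos (by positivity)
  refine h3.trans (le_of_eq ?_)
  rw [rho_eq_t]
  field_simp
  ring

lemma abs_log_one_sub_rho_le (j : ℤ) : |Real.log (1 - rho p c j)| ≤ tpar p c j := by
  have h0 := rho_pos (c := c) hp hp1 j
  have h1 := rho_lt_one (c := c) hp hp1 j
  have ht := tpar_pos (c := c) hp hp1 j
  have hpos : 0 < 1 - rho p c j := by linarith
  have h2 : Real.log (1 - rho p c j) ≤ 0 := Real.log_nonpos hpos.le (by linarith)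
  rw [abs_of_nonpos h2, ← Real.log_inv]
  have h3 : Real.log (1 - rho p c j)⁻¹ ≤ (1 - rho p c j)⁻¹ - 1 :=
    Real.log_le_sub_one_of_pos (by positivity)
  refine h3.trans (le_of_eq ?_)
  rw [one_sub_rho hp hp1]
  field_simp
  ring

lemma wFactor_pos (η : ℤ → ℕ) (j : ℤ) : 0 < wFactor p c η j := by
  unfold wFactor
  split
  · exact rho_pos hp hp1 j
  · have := rho_lt_one (c := c) hp hp1 j; linarith

lemma abs_log_ground_le (j : ℤ) :
    |Real.log (wFactor p c ground j)| ≤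
      if 1 ≤ j then (tpar p c j)⁻¹ else tpar p c j := by
  unfold wFactor ground
  by_cases h : 1 ≤ j
  · simp only [h, if_true]
    exact abs_log_rho_le hp hp1 j
  · simp only [h, if_false]
    norm_num
    exact abs_log_one_sub_rho_le hp hp1 j

lemma summable_abs_log_ground :
    Summable fun j : ℤ => |Real.log (wFactor p c ground j)| := by
  set r := p / (1 - p) with hr
  have hr1 : 1 < r := r_gt_one hp hp1
  have hr0 : 0 < r := r_pos hp hp1
  have hrinv : r⁻¹ < 1 := inv_lt_one_of_one_lt₀ hr1
  have hgeo : Summable fun n : ℕ => (Real.exp c + Real.exp (-c)) * r⁻¹ ^ n :=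
    (summable_geometric_of_lt_one (by positivity) hrinv).mul_left _
  apply Summable.of_nat_of_neg
  · apply Summable.of_nonneg_of_le (fun n => abs_nonneg _) _ hgeo
    intro n
    refine (abs_log_ground_le hp hp1 (n : ℤ)).trans ?_
    by_cases h : 1 ≤ (n : ℤ)
    · simp only [h, if_true]
      have : (tpar p c (n : ℤ))⁻¹ = Real.exp (-c) * r⁻¹ ^ n := by
        rw [tpar, mul_inv, ← Real.exp_neg, ← zpow_natCast, ← zpow_neg, hr]
        rw [zpow_neg, zpow_natCast, ← inv_pow]
        norm_cast
      rw [this]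
      have h1 : Real.exp (-c) ≤ Real.exp c + Real.exp (-c) := by
        have := Real.exp_pos c; linarith
      exact mul_le_mul_of_nonneg_right h1 (by positivity)
    · have hn : n = 0 := by omega
      subst hn
      simp only [h, if_false]
      rw [tpar]
      norm_num
      have := Real.exp_pos (-c); nlinarith [Real.exp_pos c]
  · apply Summable.of_nonneg_of_le (fun n => abs_nonneg _) _ hgeo
    intro n
    refine (abs_log_ground_le hp hp1 (-(n : ℤ))).trans ?_
    have h : ¬ (1 : ℤ) ≤ -(n : ℤ) := by omega
    simp only [h, if_false]
    have : tpar p c (-(n : ℤ)) = Real.exp c * r⁻¹ ^ n := by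
      rw [tpar, hr, zpow_neg, zpow_natCast, ← inv_pow]
    rw [this]
    have h1 : Real.exp c ≤ Real.exp c + Real.exp (-c) := by
      have := Real.exp_pos (-c); linarith
    exact mul_le_mul_of_nonneg_right h1 (by positivity)

lemma summable_log_wFactor (η : ℤ → ℕ) (hη : memH η) :
    Summable fun j : ℤ => Real.log (wFactor p c η j) := by
  have hground : Summable fun j : ℤ => Real.log (wFactor p c ground j) :=
    (summable_abs_log_ground hp hp1).of_abs
  apply hground.congr_cofinite
  rw [Filter.EventuallyEq, Filter.eventually_cofinite]
  apply Set.Finite.subset ((hη.2.1.union hη.2.2))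
  intro j hj
  simp only [Set.mem_setOf_eq, Set.mem_union]
  by_contra hcon
  push_neg at hcon
  apply hj
  have : ground j = 1 ↔ η j = 1 := by
    unfold ground
    by_cases h : 1 ≤ j
    · simp only [h, if_true]
      constructor
      · intro _
        have h2 := hη.1 j
        have h3 := hcon.2 h
        omega
      · intro _; trivial
    · simp only [h, if_false]
      have h4 : j ≤ 0 := by omega
      constructor
      · omega
      · intro h5; exact absurd (hcon.1 h4 h5) (by trivial)
  unfold wFactor
  by_cases h : η j = 1
  · rw [if_pos h, if_pos (this.mpr h)]
  · rw [if_neg h, if_neg (fun hh => h (this.mp hh))]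

omit hp hp1 in
lemma multipliable_of_pos_of_summable_log {f : ℤ → ℝ} (hf : ∀ j, 0 < f j)
    (hs : Summable fun j => Real.log (f j)) : Multipliable f := by
  have heq : (Real.exp ∘ fun j : ℤ => Real.log (f j)) = f :=
    funext fun j => Real.exp_log (hf j)
  exact ⟨_, heq ▸ hs.hasSum.rexp⟩

omit hp hp1 in
lemma summable_log_update {f : ℤ → ℝ} (hs : Summable fun j => Real.log (f j))
    (a : ℤ) (v : ℝ) : Summable fun j => Real.log (Function.update f a v j) := by
  have h : (fun j => Real.log (Function.update f a v j)) =
      Function.update (fun j => Real.log (f j)) a (Real.log v) := by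
    funext j
    rcases eq_or_ne j a with rfl | h
    · simp
    · simp [Function.update_of_ne h]
  rw [h]
  exact hs.update a _

end

set_option maxHeartbeats 1000000 in
/-- Detailed balance (reversibility) of the ASEP blocking measure: if `η ∈ H` has a
particle at site `i` and a hole at site `i+1`, and `η'` is obtained from `η` by moving
that particle from `i` to `i+1`, then `η' ∈ H` and `p · w^c(η) = q · w^c(η')`. -/
theorem wBlock_detailed_balance (p c : ℝ) (hp : 1 / 2 < p) (hp1 : p < 1)
    (η : ℤ → ℕ) (hη : memH η) (i : ℤ) (h1 : η i = 1) (h0 : η (i + 1) = 0) :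
    memH (Function.update (Function.update η i 0) (i + 1) 1) ∧
      p * wBlock p c η =
        (1 - p) * wBlock p c (Function.update (Function.update η i 0) (i + 1) 1) := by
  obtain ⟨hle, hfin1, hfin2⟩ := hη
  have hii : i + 1 ≠ i := by omega
  set η' := Function.update (Function.update η i 0) (i + 1) 1 with hη'def
  have hv1 : η' (i + 1) = 1 := by simp [hη'def]
  have hv0 : η' i = 0 := by
    rw [hη'def, Function.update_of_ne (by omega), Function.update_self]
  have hvo : ∀ m, m ≠ i + 1 → m ≠ i → η' m = η m := by
    intro m hm1 hm2
    rw [hη'def, Function.update_of_ne hm1, Function.update_of_ne hm2]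
  have hmem : memH η' := by
    refine ⟨?_, ?_, ?_⟩
    · intro m
      rcases eq_or_ne m (i + 1) with rfl | hm1
      · rw [hv1]
      · rcases eq_or_ne m i with rfl | hm2
        · rw [hv0]; omega
        · rw [hvo m hm1 hm2]; exact hle m
    · apply (hfin1.insert (i + 1)).subset
      rintro m ⟨hm0, hm1⟩
      rcases eq_or_ne m (i + 1) with rfl | hne1
      · exact Set.mem_insert _ _
      · rcases eq_or_ne m i with rfl | hne2
        · rw [hv0] at hm1; omega
        · exact Set.mem_insert_of_mem _ ⟨hm0, by rwa [hvo m hne1 hne2] at hm1⟩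
    · apply (hfin2.insert i).subset
      rintro m ⟨hm0, hm1⟩
      rcases eq_or_ne m (i + 1) with rfl | hne1
      · rw [hv1] at hm1; omega
      · rcases eq_or_ne m i with rfl | hne2
        · exact Set.mem_insert _ _
        · exact Set.mem_insert_of_mem _ ⟨hm0, by rwa [hvo m hne1 hne2] at hm1⟩
  refine ⟨hmem, ?_⟩
  set f := wFactor p c η with hf
  set f' := wFactor p c η' with hf'
  have hfpos : ∀ j, 0 < f j := wFactor_pos hp hp1 η
  have hf'pos : ∀ j, 0 < f' j := wFactor_pos hp hp1 η'
  have hsl : Summable fun j => Real.log (f j) :=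
    summable_log_wFactor hp hp1 η ⟨hle, hfin1, hfin2⟩
  have hsl' : Summable fun j => Real.log (f' j) :=
    summable_log_wFactor hp hp1 η' hmem
  -- the common doubly-updated function
  have hsame : Function.update (Function.update f' i 1) (i + 1) 1 =
      Function.update (Function.update f i 1) (i + 1) 1 := by
    funext x
    rcases eq_or_ne x (i + 1) with rfl | hx1
    · simp
    · rw [Function.update_of_ne hx1, Function.update_of_ne hx1]
      rcases eq_or_ne x i with rfl | hx2
      · simp
      · rw [Function.update_of_ne hx2, Function.update_of_ne hx2, hf, hf']
        unfold wFactor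
        rw [hvo x hx1 hx2]
  -- positivity of updates
  have hupos : ∀ (g : ℤ → ℝ), (∀ j, 0 < g j) → ∀ (a : ℤ) (j : ℤ),
      0 < Function.update g a 1 j := by
    intro g hg a j
    rcases eq_or_ne j a with rfl | h
    · simp
    · rw [Function.update_of_ne h]; exact hg j
  -- key decomposition lemma
  have key : ∀ (g : ℤ → ℝ), (∀ j, 0 < g j) → (Summable fun j => Real.log (g j)) →
      ∏' x, g x = g i * (g (i + 1) *
        ∏' x, Function.update (Function.update g i 1) (i + 1) 1 x) := by
    intro g hg hs
    have m1 : Multipliable (Function.update g i 1) :=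
      multipliable_of_pos_of_summable_log (hupos g hg i) (summable_log_update hs i 1)
    have m2 : Multipliable (Function.update (Function.update g i 1) (i + 1) 1) :=
      multipliable_of_pos_of_summable_log (hupos _ (hupos g hg i) (i + 1))
        (summable_log_update (summable_log_update hs i 1) (i + 1) 1)
    have e1 : (fun x => ite (x = i) 1 (g x)) = Function.update g i 1 :=
      funext fun x => (Function.update_apply g i 1 x).symm
    have e2 : (fun x => ite (x = i + 1) 1 (Function.update g i 1 x)) =
        Function.update (Function.update g i 1) (i + 1) 1 :=
      funext fun x => (Function.update_apply _ (i + 1) 1 x).symm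
    rw [Multipliable.tprod_eq_mul_tprod_ite' i m1]
    congr 1
    calc ∏' x, ite (x = i) 1 (g x) = ∏' x, Function.update g i 1 x := by rw [e1]
      _ = Function.update g i 1 (i + 1) *
            ∏' x, ite (x = i + 1) 1 (Function.update g i 1 x) := by
          rw [Multipliable.tprod_eq_mul_tprod_ite' (i + 1) m2]
      _ = g (i + 1) * ∏' x, Function.update (Function.update g i 1) (i + 1) 1 x := by
          rw [Function.update_of_ne hii, e2]
  have hWeq : wBlock p c η = f i * (f (i + 1) *
      ∏' x, Function.update (Function.update f i 1) (i + 1) 1 x) := key f hfpos hsl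
  have hW'eq : wBlock p c η' = f' i * (f' (i + 1) *
      ∏' x, Function.update (Function.update f i 1) (i + 1) 1 x) := by
    rw [← hsame]
    exact key f' hf'pos hsl'
  rw [hWeq, hW'eq]
  have hfi : f i = rho p c i := by rw [hf]; unfold wFactor; rw [if_pos h1]
  have hfi1 : f (i + 1) = 1 - rho p c (i + 1) := by
    rw [hf]; unfold wFactor; rw [if_neg (by omega)]
  have hf'i : f' i = 1 - rho p c i := by
    rw [hf']; unfold wFactor; rw [if_neg (by omega)]
  have hf'i1 : f' (i + 1) = rho p c (i + 1) := by
    rw [hf']; unfold wFactor; rw [if_pos hv1]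
  rw [hfi, hfi1, hf'i, hf'i1, rho_eq_t, rho_eq_t]
  have ht : tpar p c (i + 1) = tpar p c i * (p / (1 - p)) := by
    rw [tpar, tpar, zpow_add_one₀ (r_pos hp hp1).ne', mul_assoc]
  rw [ht]
  have hti : (0:ℝ) < tpar p c i := tpar_pos hp hp1 i
  have h1p : (0:ℝ) < 1 - p := by linarith
  have hp0 : (0:ℝ) < p := by linarith
  have hd1 : (0:ℝ) < 1 + tpar p c i := by linarith
  have hd2 : (0:ℝ) < 1 + tpar p c i * (p / (1 - p)) := by positivity
  field_simp
  ring
end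

section
/- The zero range blocking measure is a probability measure: for every z ∈ Ω the family of factors (i ↦ (p/q)^{(i−1) z_i} (1 − (p/q)^{i−1})), indexed by i ≤ 0, is multipliable with strictly positive product μ(z), and the family (z ↦ μ(z)) over the countable set Ω is summable with ∑_{z ∈ Ω} μ(z) = 1. -/
/- Zero range configurations on `ℤ_{≤0}`: we encode `z : ℤ_{≤0} → ℕ` as `z : ℕ → ℕ`,
with `z k` standing for the occupation `z_{-k}` of site `-k`; `Ω` consists of such
configurations with finite support. Throughout, `p ∈ (1/2, 1)` and `q = 1 - p`. -/

/-- The factor of the zero range blocking measure at site `i = -k ≤ 0`: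
`(p/q)^{(i-1) z_i} (1 - (p/q)^{i-1})`, the probability that a Geometric random variable
with parameter `1 - (p/q)^{i-1}` equals `z_i`. -/
noncomputable def zrFactor (p : ℝ) (z : ℕ → ℕ) (k : ℕ) : ℝ :=
  (p / (1 - p)) ^ ((-(k : ℤ) - 1) * z k) * (1 - (p / (1 - p)) ^ (-(k : ℤ) - 1))

/-- The zero range blocking weight `μ(z) = ∏_{i ≤ 0} (p/q)^{(i-1) z_i} (1 - (p/q)^{i-1})`. -/
noncomputable def zrMu (p : ℝ) (z : ℕ → ℕ) : ℝ := ∏' k : ℕ, zrFactor p z k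

open Real Filter

private lemma zr_summable_log {t : ℝ} (ht : 0 < t) (ht1 : t < 1) :
    Summable fun k : ℕ => Real.log (1 - t ^ (k + 1)) := by
  have hxle : ∀ k : ℕ, t ^ (k + 1) ≤ t := fun k =>
    pow_le_of_le_one ht.le ht1.le (Nat.succ_ne_zero k)
  have hxpos : ∀ k : ℕ, 0 < t ^ (k + 1) := fun k => pow_pos ht _
  have hpos : ∀ k : ℕ, 0 < 1 - t ^ (k + 1) := fun k => by have := hxle k; linarith
  have hbd : Summable fun k : ℕ => (1 - t)⁻¹ * t ^ (k + 1) := by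
    refine ((summable_geometric_of_lt_one ht.le ht1).mul_left ((1 - t)⁻¹ * t)).congr fun k => ?_
    ring
  have key : Summable fun k : ℕ => -Real.log (1 - t ^ (k + 1)) := by
    refine Summable.of_nonneg_of_le (fun k => ?_) (fun k => ?_) hbd
    · have hl : Real.log (1 - t ^ (k + 1)) ≤ 0 :=
        Real.log_nonpos (by have := hpos k; linarith) (by have := hxpos k; linarith)
      linarith
    · have h2 := Real.log_le_sub_one_of_pos (inv_pos.2 (hpos k))
      rw [Real.log_inv] at h2
      have hinv : (1 - t ^ (k + 1))⁻¹ ≤ (1 - t)⁻¹ := by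
        gcongr
        · have := hxle k; linarith
      have hne : (1 : ℝ) - t ^ (k + 1) ≠ 0 := ne_of_gt (hpos k)
      have e : (1 - t ^ (k + 1))⁻¹ - 1 = t ^ (k + 1) * (1 - t ^ (k + 1))⁻¹ := by
        field_simp
        ring
      have h3 : t ^ (k + 1) * (1 - t ^ (k + 1))⁻¹ ≤ t ^ (k + 1) * (1 - t)⁻¹ :=
        mul_le_mul_of_nonneg_left hinv (hxpos k).le
      have h4 : t ^ (k + 1) * (1 - t)⁻¹ = (1 - t)⁻¹ * t ^ (k + 1) := by ring
      linarith
  have := key.neg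
  simpa using this

private lemma zrFactor_eq {p : ℝ} (hp : 1 / 2 < p) (hp1 : p < 1) (z : ℕ → ℕ) (k : ℕ) :
    zrFactor p z k =
      ((1 - p) / p) ^ ((k + 1) * z k) * (1 - ((1 - p) / p) ^ (k + 1)) := by
  have hp0 : (0 : ℝ) < p := by linarith
  have hq0 : (0 : ℝ) < 1 - p := by linarith
  have hinv : p / (1 - p) = ((1 - p) / p)⁻¹ := by rw [inv_div]
  unfold zrFactor
  rw [hinv]
  have e1 : (((1 - p) / p)⁻¹) ^ ((-(k : ℤ) - 1) * (z k : ℤ)) =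
      ((1 - p) / p) ^ ((k + 1) * z k) := by
    have h : ((-(k : ℤ) - 1) * (z k : ℤ)) = -(((k + 1) * z k : ℕ) : ℤ) := by push_cast; ring
    rw [h, inv_zpow, ← zpow_neg, neg_neg, zpow_natCast]
  have e2 : (((1 - p) / p)⁻¹) ^ (-(k : ℤ) - 1) = ((1 - p) / p) ^ (k + 1) := by
    have h : (-(k : ℤ) - 1) = -(((k + 1) : ℕ) : ℤ) := by push_cast; ring
    rw [h, inv_zpow, ← zpow_neg, neg_neg, zpow_natCast]
  rw [e1, e2]

private lemma zr_tsum_pi {m : ℕ} (g : Fin m → ℕ → ENNReal) :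
    ∑' w : Fin m → ℕ, ∏ i, g i (w i) = ∏ i, ∑' n, g i n := by
  induction m with
  | zero =>
    rw [tsum_eq_single (fun i => i.elim0)
      (fun b hb => absurd (funext fun i => i.elim0) hb)]
    simp
  | succ m ih =>
    calc ∑' w : Fin (m + 1) → ℕ, ∏ i, g i (w i)
        = ∑' x : ℕ × (Fin m → ℕ), ∏ i, g i ((Fin.consEquiv fun _ => ℕ) x i) :=
          ((Fin.consEquiv fun _ => ℕ).tsum_eq _).symm
      _ = ∑' x : ℕ × (Fin m → ℕ), g 0 x.1 * ∏ i : Fin m, g i.succ (x.2 i) := by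
          refine tsum_congr fun x => ?_
          rw [Fin.prod_univ_succ]
          simp [Fin.consEquiv]
      _ = ∑' (a : ℕ) (w : Fin m → ℕ), g 0 a * ∏ i : Fin m, g i.succ (w i) :=
          ENNReal.tsum_prod'
      _ = (∑' a : ℕ, g 0 a) * ∑' w : Fin m → ℕ, ∏ i : Fin m, g i.succ (w i) := by
          simp_rw [ENNReal.tsum_mul_left]
          rw [ENNReal.tsum_mul_right]
      _ = ∏ i, ∑' n, g i n := by
          rw [ih fun i => g i.succ, Fin.prod_univ_succ]

/-- The zero range blocking measure is a probability measure: for every `z ∈ Ω` the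
family of factors is multipliable with strictly positive product `μ(z)`, and the family
`z ↦ μ(z)` is summable over the countable set `Ω` with total mass `1`. -/
theorem zrMu_probability_measure (p : ℝ) (hp : 1 / 2 < p) (hp1 : p < 1) :
    (∀ z : ℕ → ℕ, (Function.support z).Finite →
      Multipliable (zrFactor p z) ∧ 0 < zrMu p z) ∧
    Summable (fun z : {z : ℕ → ℕ // (Function.support z).Finite} => zrMu p z.1) ∧
    ∑' z : {z : ℕ → ℕ // (Function.support z).Finite}, zrMu p z.1 = 1 := by
  classical
  have hp0 : (0 : ℝ) < p := by linarith
  have hq0 : (0 : ℝ) < 1 - p := by linarith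
  set t : ℝ := (1 - p) / p with htdef
  have ht : 0 < t := by positivity
  have ht1 : t < 1 := by rw [htdef, div_lt_one hp0]; linarith
  have hxpos : ∀ j : ℕ, 0 < t ^ j := fun j => pow_pos ht _
  have hxlt : ∀ j : ℕ, j ≠ 0 → t ^ j < 1 := fun j hj => pow_lt_one₀ ht.le ht1 hj
  have hBpos : ∀ j : ℕ, 0 < 1 - t ^ (j + 1) := fun j => by
    have := hxlt (j + 1) (Nat.succ_ne_zero j); linarith
  -- positivity of each factor
  have hfact_pos : ∀ (z : ℕ → ℕ) (k : ℕ), 0 < zrFactor p z k := by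
    intro z k
    rw [zrFactor_eq hp hp1]
    exact mul_pos (hxpos _) (hBpos k)
  -- summability of logs of factors
  have hlogB : Summable fun k : ℕ => Real.log (1 - t ^ (k + 1)) := zr_summable_log ht ht1
  have hlog_fact : ∀ (z : ℕ → ℕ), (Function.support z).Finite →
      Summable fun k : ℕ => Real.log (zrFactor p z k) := by
    intro z hz
    have heq : ∀ k : ℕ, Real.log (zrFactor p z k) =
        Real.log (t ^ ((k + 1) * z k)) + Real.log (1 - t ^ (k + 1)) := by
      intro k
      rw [zrFactor_eq hp hp1, Real.log_mul (ne_of_gt (hxpos _)) (ne_of_gt (hBpos k))]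
    have h1 : Summable fun k : ℕ => Real.log (t ^ ((k + 1) * z k)) := by
      refine summable_of_ne_finset_zero (s := hz.toFinset) fun k hk => ?_
      have hzk : z k = 0 := by
        by_contra h
        exact hk (hz.mem_toFinset.2 h)
      simp [hzk]
    exact (h1.add hlogB).congr fun k => (heq k).symm
  -- multipliability and positivity of the product
  have hmult : ∀ (z : ℕ → ℕ), (Function.support z).Finite → Multipliable (zrFactor p z) := by
    intro z hz
    exact Real.multipliable_of_summable_log (fun k => hfact_pos z k) (hlog_fact z hz)
  have hmu_exp : ∀ (z : ℕ → ℕ), (Function.support z).Finite →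
      zrMu p z = Real.exp (∑' k : ℕ, Real.log (zrFactor p z k)) := by
    intro z hz
    have := Real.rexp_tsum_eq_tprod (fun k => hfact_pos z k) (hlog_fact z hz)
    exact this.symm
  have hmu_pos : ∀ (z : ℕ → ℕ), (Function.support z).Finite → 0 < zrMu p z := by
    intro z hz
    rw [hmu_exp z hz]
    exact Real.exp_pos _
  refine ⟨fun z hz => ⟨hmult z hz, hmu_pos z hz⟩, ?_⟩
  -- the tail products
  set T : ℕ → ℝ := fun m => ∏' k : ℕ, (1 - t ^ (k + m + 1)) with hTdef
  have hlog_shift : ∀ m : ℕ, Summable fun k : ℕ => Real.log (1 - t ^ (k + m + 1)) := by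
    intro m
    exact (summable_nat_add_iff (f := fun k : ℕ => Real.log (1 - t ^ (k + 1))) m).2 hlogB
  set S : ℕ → ℝ := fun m => ∑' k : ℕ, Real.log (1 - t ^ (k + m + 1)) with hSdef
  have hmultB : ∀ m : ℕ, Multipliable fun k : ℕ => 1 - t ^ (k + m + 1) := by
    intro m
    exact Real.multipliable_of_summable_log (fun k => hBpos (k + m)) (hlog_shift m)
  have hT_exp : ∀ m : ℕ, T m = Real.exp (S m) := by
    intro m
    have := Real.rexp_tsum_eq_tprod (fun k => hBpos (k + m)) (hlog_shift m)
    exact this.symm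
  have hT_pos : ∀ m : ℕ, 0 < T m := fun m => by rw [hT_exp m]; exact Real.exp_pos _
  have hS_nonpos : ∀ m : ℕ, S m ≤ 0 := by
    intro m
    refine tsum_nonpos fun k => ?_
    exact Real.log_nonpos (by have := hBpos (k + m); linarith)
      (by have := hxpos (k + m + 1); linarith)
  have hT_le_one : ∀ m : ℕ, T m ≤ 1 := by
    intro m
    rw [hT_exp m, ← Real.exp_zero]
    exact Real.exp_le_exp.2 (hS_nonpos m)
  have hS_mono : ∀ m : ℕ, S m ≤ S (m + 1) := by
    intro m
    have hsplit : S m = Real.log (1 - t ^ (m + 1)) + S (m + 1) := by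
      have h0 := (hlog_shift m).tsum_eq_zero_add
      have h1 : ∑' k : ℕ, Real.log (1 - t ^ (k + 1 + m + 1))
          = ∑' k : ℕ, Real.log (1 - t ^ (k + (m + 1) + 1)) := by
        refine tsum_congr fun k => ?_
        have hkk : k + 1 + m + 1 = k + (m + 1) + 1 := by omega
        rw [hkk]
      show (∑' k : ℕ, Real.log (1 - t ^ (k + m + 1)))
          = Real.log (1 - t ^ (m + 1)) + ∑' k : ℕ, Real.log (1 - t ^ (k + (m + 1) + 1))
      rw [h0, ← h1]
      norm_num
    have hlog0 : Real.log (1 - t ^ (m + 1)) ≤ 0 :=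
      Real.log_nonpos (by have := hBpos m; linarith) (by have := hxpos (m + 1); linarith)
    linarith
  have hT_mono : Monotone fun m => T m := by
    refine monotone_nat_of_le_succ fun m => ?_
    rw [hT_exp m, hT_exp (m + 1)]
    exact Real.exp_le_exp.2 (hS_mono m)
  have hT_tendsto : Tendsto T atTop (nhds 1) := by
    have hS_tendsto : Tendsto S atTop (nhds 0) := by
      have := tendsto_sum_nat_add fun k : ℕ => Real.log (1 - t ^ (k + 1))
      refine this.congr fun m => ?_
      rfl
    have := (Real.continuous_exp.tendsto 0).comp hS_tendsto
    rw [Real.exp_zero] at this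
    exact Tendsto.congr (fun m => (hT_exp m).symm) this
  -- closed form for the measure of configurations supported in `range m`
  have hmu_eq : ∀ (z : ℕ → ℕ), (Function.support z).Finite → ∀ m : ℕ,
      (∀ k, m ≤ k → z k = 0) →
      zrMu p z = (∏ k ∈ Finset.range m, zrFactor p z k) * T m := by
    intro z hz m hzm
    have hshift : Multipliable fun k : ℕ => zrFactor p z (k + m) := by
      refine (hmultB m).congr fun k => ?_
      rw [zrFactor_eq hp hp1, hzm (k + m) (Nat.le_add_left m k)]
      simp [htdef]
    have hsplit := hshift.prod_mul_tprod_nat_mul'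
    have htail : (∏' k : ℕ, zrFactor p z (k + m)) = T m := by
      refine tprod_congr fun k => ?_
      rw [zrFactor_eq hp hp1, hzm (k + m) (Nat.le_add_left m k)]
      simp [htdef]
    rw [zrMu, ← hsplit, htail]
  -- the ENNReal-valued weight
  set ν : {z : ℕ → ℕ // (Function.support z).Finite} → ENNReal :=
    fun z => ENNReal.ofReal (zrMu p z.1) with hνdef
  set ind : ℕ → {z : ℕ → ℕ // (Function.support z).Finite} → ENNReal :=
    fun m => Set.indicator {z | Function.support z.1 ⊆ ↑(Finset.range m)} ν with hinddef
  -- Step A : partial sums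
  have hstepA : ∀ m : ℕ, ∑' z, ind m z = ENNReal.ofReal (T m) := by
    intro m
    set j : (Fin m → ℕ) → {z : ℕ → ℕ // (Function.support z).Finite} :=
      fun w => ⟨fun k => if h : k < m then w ⟨k, h⟩ else 0, by
        refine Set.Finite.subset (Set.finite_Iio m) fun k hk => ?_
        simp only [Function.mem_support] at hk
        by_contra hkm
        simp only [Set.mem_Iio, not_lt] at hkm
        exact hk (dif_neg (not_lt.2 hkm))⟩ with hjdef
    have hj_apply : ∀ (w : Fin m → ℕ) (i : Fin m), (j w).1 i = w i := by
      intro w i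
      simp [hjdef, i.isLt]
    have hj_inj : Function.Injective j := by
      intro w w' h
      funext i
      have := congrFun (congrArg Subtype.val h) i
      simpa [hjdef, i.isLt] using this
    have hsupp : Function.support (ind m) ⊆ Set.range j := by
      intro z hz
      have hmem : Function.support z.1 ⊆ ↑(Finset.range m) := by
        by_contra h
        have hnm : z ∉ {z : {z : ℕ → ℕ // (Function.support z).Finite} |
            Function.support z.1 ⊆ ↑(Finset.range m)} := h
        exact hz (Set.indicator_of_notMem hnm ν)
      refine ⟨fun i => z.1 i, ?_⟩
      apply Subtype.ext
      funext k
      by_cases h : k < m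
      · simp [hjdef, h]
      · have : z.1 k = 0 := by
          by_contra hk
          have := hmem hk
          simp only [Finset.coe_range, Set.mem_Iio] at this
          exact h this
        simp [hjdef, h, this]
    have hkey := hj_inj.tsum_eq hsupp
    rw [← hkey]
    have hjmem : ∀ w : Fin m → ℕ, (j w) ∈ {z : {z : ℕ → ℕ // (Function.support z).Finite} |
        Function.support z.1 ⊆ ↑(Finset.range m)} := by
      intro w
      intro k hk
      simp only [Function.mem_support] at hk
      by_contra hkm
      simp only [Finset.coe_range, Set.mem_Iio, not_lt] at hkm
      exact hk (dif_neg (not_lt.2 hkm))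
    have hind_j : ∀ w : Fin m → ℕ, ind m (j w) =
        (∏ i : Fin m, ENNReal.ofReal (t ^ ((i.1 + 1) * w i) * (1 - t ^ (i.1 + 1)))) *
          ENNReal.ofReal (T m) := by
      intro w
      have hzero : ∀ k, m ≤ k → (j w).1 k = 0 := fun k hk => dif_neg (not_lt.2 hk)
      have h1 : ind m (j w) = ν (j w) := Set.indicator_of_mem (hjmem w) ν
      rw [h1, hνdef]
      simp only
      rw [hmu_eq (j w).1 (j w).2 m hzero,
        ENNReal.ofReal_mul (Finset.prod_nonneg fun k _ => (hfact_pos _ k).le),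
        ENNReal.ofReal_prod_of_nonneg fun k _ => (hfact_pos _ k).le]
      congr 1
      rw [← Fin.prod_univ_eq_prod_range (fun k => ENNReal.ofReal (zrFactor p (j w).1 k)) m]
      refine Finset.prod_congr rfl fun i _ => ?_
      rw [zrFactor_eq hp hp1, hj_apply w i]
    calc ∑' w : Fin m → ℕ, ind m (j w)
        = ∑' w : Fin m → ℕ,
            (∏ i : Fin m, ENNReal.ofReal (t ^ ((i.1 + 1) * w i) * (1 - t ^ (i.1 + 1)))) *
              ENNReal.ofReal (T m) := tsum_congr hind_j
      _ = (∑' w : Fin m → ℕ,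
            ∏ i : Fin m, ENNReal.ofReal (t ^ ((i.1 + 1) * w i) * (1 - t ^ (i.1 + 1)))) *
              ENNReal.ofReal (T m) := ENNReal.tsum_mul_right
      _ = ENNReal.ofReal (T m) := by
          rw [zr_tsum_pi fun i n => ENNReal.ofReal (t ^ ((i.1 + 1) * n) * (1 - t ^ (i.1 + 1)))]
          have hone : ∀ i : Fin m,
              (∑' n : ℕ, ENNReal.ofReal (t ^ ((i.1 + 1) * n) * (1 - t ^ (i.1 + 1)))) = 1 := by
            intro i
            set x : ℝ := t ^ (i.1 + 1) with hxdef
            have hx0 : 0 ≤ x := (hxpos _).le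
            have hx1 : x < 1 := hxlt _ (Nat.succ_ne_zero _)
            have hsummable : Summable fun n : ℕ => x ^ n * (1 - x) :=
              (summable_geometric_of_lt_one hx0 hx1).mul_right _
            have heq : ∀ n : ℕ, t ^ ((i.1 + 1) * n) * (1 - t ^ (i.1 + 1)) = x ^ n * (1 - x) := by
              intro n
              rw [hxdef, ← pow_mul, Nat.mul_comm]
            have := (ENNReal.ofReal_tsum_of_nonneg
              (fun n => mul_nonneg (pow_nonneg hx0 n) (by linarith)) hsummable).symm
            calc (∑' n : ℕ, ENNReal.ofReal (t ^ ((i.1 + 1) * n) * (1 - t ^ (i.1 + 1))))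
                = ∑' n : ℕ, ENNReal.ofReal (x ^ n * (1 - x)) := by
                  refine tsum_congr fun n => ?_
                  rw [heq n]
              _ = ENNReal.ofReal (∑' n : ℕ, x ^ n * (1 - x)) := this
              _ = 1 := by
                  rw [tsum_mul_right, tsum_geometric_of_lt_one hx0 hx1,
                    inv_mul_cancel₀ (by linarith : (1 : ℝ) - x ≠ 0)]
                  exact ENNReal.ofReal_one
          rw [Finset.prod_congr rfl fun i _ => hone i]
          simp
  -- Step B : the full sum equals the supremum of the partial sums
  have hbnd : ∀ z : {z : ℕ → ℕ // (Function.support z).Finite},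
      Function.support z.1 ⊆ ↑(Finset.range (z.2.toFinset.sup id + 1)) := by
    intro z k hk
    have hk' : k ∈ z.2.toFinset := z.2.mem_toFinset.2 hk
    have h2 := Finset.le_sup (f := id) hk'
    simp only [Finset.coe_range, Set.mem_Iio, id] at h2 ⊢
    omega
  have hstepB : ∑' z, ν z = ⨆ m : ℕ, ENNReal.ofReal (T m) := by
    apply le_antisymm
    · rw [ENNReal.tsum_eq_iSup_sum]
      refine iSup_le fun F => ?_
      obtain ⟨m, hm⟩ : ∃ m, ∀ z ∈ F, Function.support z.1 ⊆ ↑(Finset.range m) := by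
        refine ⟨F.sup (fun z => z.2.toFinset.sup id + 1), fun z hz => ?_⟩
        have h1 : z.2.toFinset.sup id + 1 ≤ F.sup (fun z => z.2.toFinset.sup id + 1) :=
          Finset.le_sup (f := fun z => z.2.toFinset.sup id + 1) hz
        refine (hbnd z).trans fun k hk => ?_
        simp only [Finset.coe_range, Set.mem_Iio] at hk ⊢
        omega
      have : ∑ z ∈ F, ν z = ∑ z ∈ F, ind m z := by
        refine Finset.sum_congr rfl fun z hz => ?_
        exact (Set.indicator_of_mem (show z ∈ {z : {z : ℕ → ℕ //
          (Function.support z).Finite} | Function.support z.1 ⊆ ↑(Finset.range m)}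
          from hm z hz) ν).symm
      rw [this]
      refine le_trans (ENNReal.sum_le_tsum F) ?_
      rw [hstepA m]
      exact le_iSup (fun m => ENNReal.ofReal (T m)) m
    · refine iSup_le fun m => ?_
      rw [← hstepA m]
      exact ENNReal.tsum_le_tsum fun z => Set.indicator_le_self _ _ z
  -- Step C : the supremum is 1
  have hstepC : (⨆ m : ℕ, ENNReal.ofReal (T m)) = 1 := by
    have h1 : Tendsto (fun m => ENNReal.ofReal (T m)) atTop (nhds 1) := by
      have := (ENNReal.continuous_ofReal.tendsto 1).comp hT_tendsto
      simpa [Function.comp_def] using this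
    have h2 : Monotone fun m => ENNReal.ofReal (T m) :=
      fun a b hab => ENNReal.ofReal_le_ofReal (hT_mono hab)
    exact tendsto_nhds_unique (tendsto_atTop_iSup h2) h1
  have htot : ∑' z, ν z = 1 := by rw [hstepB, hstepC]
  have hν_ne_top : ∀ z, ν z ≠ ⊤ := fun z => ENNReal.ofReal_ne_top
  have htoReal : ∀ z : {z : ℕ → ℕ // (Function.support z).Finite},
      (ν z).toReal = zrMu p z.1 := fun z =>
    ENNReal.toReal_ofReal (hmu_pos z.1 z.2).le
  constructor
  · have := ENNReal.summable_toReal (by rw [htot]; exact ENNReal.one_ne_top)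
    exact this.congr htoReal
  · have := ENNReal.tsum_toReal_eq hν_ne_top
    rw [htot] at this
    simp only [ENNReal.toReal_one] at this
    rw [← tsum_congr htoReal]
    exact this.symm
end

section
/- Detailed balance (reversibility) of the zero range blocking measure with right boundary: for every z ∈ Ω, (i) if i ≤ −1 and z_i ≥ 1, then with z′ equal to z except z′_i = z_i − 1 and z′_{i+1} = z_{i+1} + 1, one has z′ ∈ Ω and p · μ(z) = q · μ(z′); and (ii) if z_0 ≥ 1, then with z″ equal to z except z″_0 = z_0 − 1, one has z″ ∈ Ω and p · μ(z) = q · μ(z″). -/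
/- ### Auxiliary lemmas -/

lemma zr_summable_log_aux {s : ℝ} (hs0 : 0 < s) (hs1 : s < 1) :
    Summable (fun k : ℕ => Real.log (1 - s ^ (k + 1))) := by
  have hpos : ∀ k : ℕ, 0 < 1 - s ^ (k + 1) := by
    intro k
    have : s ^ (k + 1) < 1 := pow_lt_one₀ hs0.le hs1 (Nat.succ_ne_zero k)
    linarith
  have hle : ∀ k : ℕ, s ^ (k + 1) ≤ s := by
    intro k
    calc s ^ (k + 1) ≤ s ^ 1 := pow_le_pow_of_le_one hs0.le hs1.le (by omega)
      _ = s := pow_one s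
  rw [← summable_neg_iff]
  have hsum : Summable (fun k : ℕ => s ^ k * (s / (1 - s))) :=
    (summable_geometric_of_lt_one hs0.le hs1).mul_right _
  apply hsum.of_nonneg_of_le
  · intro k
    simp only [neg_nonneg]
    exact Real.log_nonpos (hpos k).le (by nlinarith [pow_nonneg hs0.le (k + 1)])
  · intro k
    have ht := hpos k
    have h1 : 1 - s ≤ 1 - s ^ (k + 1) := by linarith [hle k]
    rw [← Real.log_inv]
    have h3 : Real.log (1 - s ^ (k + 1))⁻¹ ≤ (1 - s ^ (k + 1))⁻¹ - 1 :=
      Real.log_le_sub_one_of_pos (inv_pos.mpr ht)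
    have h4 : (1 - s ^ (k + 1))⁻¹ - 1 = s ^ (k + 1) / (1 - s ^ (k + 1)) := by
      field_simp
      ring
    have h5 : s ^ (k + 1) / (1 - s ^ (k + 1)) ≤ s ^ (k + 1) / (1 - s) := by
      gcongr
      all_goals first | positivity | linarith
    have h6 : s ^ (k + 1) / (1 - s) = s ^ k * (s / (1 - s)) := by ring
    linarith [h3, h4 ▸ h3]

lemma zr_one_lt_zpow {a : ℝ} (ha : 1 < a) (k : ℕ) : 1 < a ^ ((k : ℤ) + 1) := by
  rw [show (k : ℤ) + 1 = ((k + 1 : ℕ) : ℤ) by push_cast; ring, zpow_natCast]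
  exact one_lt_pow₀ ha (Nat.succ_ne_zero k)

lemma zrFactor_pos {p : ℝ} (hp : 1 / 2 < p) (hp1 : p < 1) (z : ℕ → ℕ) (k : ℕ) :
    0 < zrFactor p z k := by
  have hq : 0 < 1 - p := by linarith
  have hr : 1 < p / (1 - p) := (one_lt_div hq).mpr (by linarith)
  have hr0 : 0 < p / (1 - p) := by linarith
  have h1 : 1 < (p / (1 - p)) ^ ((k : ℤ) + 1) := zr_one_lt_zpow hr k
  have hlt : (p / (1 - p)) ^ (-(k : ℤ) - 1) < 1 := by
    rw [show -(k : ℤ) - 1 = -((k : ℤ) + 1) by ring, zpow_neg]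
    exact inv_lt_one_of_one_lt₀ h1
  have hpos : 0 < (p / (1 - p)) ^ ((-(k : ℤ) - 1) * (z k : ℤ)) := zpow_pos hr0 _
  have hb : 0 < 1 - (p / (1 - p)) ^ (-(k : ℤ) - 1) := by linarith
  exact mul_pos hpos hb

lemma zrMultipliable {p : ℝ} (hp : 1 / 2 < p) (hp1 : p < 1) {z : ℕ → ℕ}
    (hz : (Function.support z).Finite) : Multipliable (zrFactor p z) := by
  have hq : 0 < 1 - p := by linarith
  have hr : 1 < p / (1 - p) := (one_lt_div hq).mpr (by linarith)
  have hr0 : 0 < p / (1 - p) := by linarith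
  set r := p / (1 - p) with hrdef
  have hs : Summable (fun k : ℕ => Real.log (zrFactor p z k)) := by
    have h1 : Summable (fun k : ℕ => Real.log (1 - r ^ (-(k : ℤ) - 1))) := by
      have hinv0 : (0 : ℝ) < r⁻¹ := by positivity
      have hinv1 : r⁻¹ < 1 := inv_lt_one_of_one_lt₀ hr
      refine (zr_summable_log_aux hinv0 hinv1).congr fun k => ?_
      congr 2
      rw [← zpow_natCast r⁻¹ (k + 1), inv_zpow, ← zpow_neg]
      congr 1
      push_cast
      ring
    have h2 : Summable (fun k : ℕ => Real.log (r ^ ((-(k : ℤ) - 1) * (z k : ℤ)))) := by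
      apply summable_of_finite_support
      apply hz.subset
      intro k hk
      simp only [Function.mem_support] at hk ⊢
      intro hzk
      apply hk
      simp [hzk]
    refine (h2.add h1).congr fun k => ?_
    have ha : (0 : ℝ) < r ^ ((-(k : ℤ) - 1) * (z k : ℤ)) := zpow_pos hr0 _
    have hb : 0 < 1 - r ^ (-(k : ℤ) - 1) := by
      have h1' : 1 < r ^ ((k : ℤ) + 1) := zr_one_lt_zpow hr k
      have : r ^ (-(k : ℤ) - 1) < 1 := by
        rw [show -(k : ℤ) - 1 = -((k : ℤ) + 1) by ring, zpow_neg]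
        exact inv_lt_one_of_one_lt₀ h1'
      linarith
    rw [zrFactor, Real.log_mul (ne_of_gt ha) (ne_of_gt hb)]
  exact Real.multipliable_of_summable_log (fun k => zrFactor_pos hp hp1 z k) hs

lemma tprod_update_mul {f : ℕ → ℝ} (hf : Multipliable f) (j : ℕ) (c : ℝ) :
    Multipliable (Function.update f j (c * f j)) ∧
    ∏' k, Function.update f j (c * f j) k = c * ∏' k, f k := by
  have hfun : Function.update f j (c * f j) = fun i => (if i = j then c else 1) * f i := by
    funext i
    rcases eq_or_ne i j with rfl | h
    · simp
    · simp [Function.update_of_ne h, h]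
  have hg : Multipliable (fun i : ℕ => if i = j then c else (1 : ℝ)) := by
    apply multipliable_of_finite_mulSupport
    apply (Set.finite_singleton j).subset
    intro i hi
    simp only [Function.mem_mulSupport] at hi
    rcases eq_or_ne i j with rfl | h
    · exact Set.mem_singleton _
    · exact absurd (if_neg h) hi
  refine ⟨hfun ▸ hg.mul hf, ?_⟩
  rw [hfun, Multipliable.tprod_mul hg hf, tprod_eq_mulSingle j (fun b hb => if_neg hb)]
  simp

/-- Detailed balance (reversibility) of the zero range blocking measure with right
boundary. -/
theorem zrMu_detailed_balance (p : ℝ) (hp : 1 / 2 < p) (hp1 : p < 1)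
    (z : ℕ → ℕ) (hz : (Function.support z).Finite) :
    (∀ k : ℕ, 1 ≤ k → 1 ≤ z k →
      (Function.support
          (Function.update (Function.update z k (z k - 1)) (k - 1) (z (k - 1) + 1))).Finite ∧
      p * zrMu p z =
        (1 - p) * zrMu p
          (Function.update (Function.update z k (z k - 1)) (k - 1) (z (k - 1) + 1))) ∧
    (1 ≤ z 0 →
      (Function.support (Function.update z 0 (z 0 - 1))).Finite ∧
      p * zrMu p z = (1 - p) * zrMu p (Function.update z 0 (z 0 - 1))) := by
  have hq : (0 : ℝ) < 1 - p := by linarith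
  have hr1 : 1 < p / (1 - p) := (one_lt_div hq).mpr (by linarith)
  have hr0 : (0 : ℝ) < p / (1 - p) := by linarith
  set r := p / (1 - p) with hrdef
  have hrne : r ≠ 0 := ne_of_gt hr0
  have hqr : (1 - p) * r = p := by
    rw [hrdef]; field_simp
  have hF := zrMultipliable hp hp1 hz
  constructor
  · intro k hk hzk
    set z' := Function.update (Function.update z k (z k - 1)) (k - 1) (z (k - 1) + 1) with hz'
    have hk1 : k - 1 ≠ k := by omega
    have hsupp : (Function.support z').Finite := by
      apply (hz.union ((Set.finite_singleton k).union (Set.finite_singleton (k - 1)))).subset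
      intro j hj
      simp only [Set.mem_union, Set.mem_singleton_iff, Function.mem_support]
      rcases eq_or_ne j (k - 1) with rfl | h1
      · tauto
      rcases eq_or_ne j k with rfl | h2
      · tauto
      · left
        have : z' j = z j := by
          rw [hz', Function.update_of_ne h1, Function.update_of_ne h2]
        rwa [Function.mem_support, this] at hj
    refine ⟨hsupp, ?_⟩
    have hG := tprod_update_mul hF k (r ^ ((k : ℤ) + 1))
    have hH := tprod_update_mul hG.1 (k - 1) (r ^ (-(k : ℤ)))
    have hfun : zrFactor p z' =
        Function.update (Function.update (zrFactor p z) k (r ^ ((k : ℤ) + 1) * zrFactor p z k))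
          (k - 1)
          (r ^ (-(k : ℤ)) *
            Function.update (zrFactor p z) k (r ^ ((k : ℤ) + 1) * zrFactor p z k) (k - 1)) := by
      funext j
      rcases eq_or_ne j (k - 1) with h | hj1
      · rw [h, Function.update_self, Function.update_of_ne hk1]
        have hv : z' (k - 1) = z (k - 1) + 1 := by rw [hz', Function.update_self]
        simp only [zrFactor, hv, ← hrdef]
        rw [show -((k - 1 : ℕ) : ℤ) - 1 = -(k : ℤ) by omega]
        push_cast
        rw [show -(k : ℤ) * ((z (k - 1) : ℤ) + 1) = -(k : ℤ) + -(k : ℤ) * (z (k - 1) : ℤ) by ring,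
          zpow_add₀ hrne]
        ring
      · rw [Function.update_of_ne hj1]
        rcases eq_or_ne j k with h | hj2
        · rw [h, Function.update_self]
          have hv : z' k = z k - 1 := by
            rw [hz', Function.update_of_ne (Ne.symm hk1), Function.update_self]
          simp only [zrFactor, hv, ← hrdef]
          rw [show ((z k - 1 : ℕ) : ℤ) = (z k : ℤ) - 1 by omega]
          rw [show (-(k : ℤ) - 1) * ((z k : ℤ) - 1)
              = ((k : ℤ) + 1) + (-(k : ℤ) - 1) * (z k : ℤ) by ring, zpow_add₀ hrne]
          ring
        · rw [Function.update_of_ne hj2]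
          have hv : z' j = z j := by
            rw [hz', Function.update_of_ne hj1, Function.update_of_ne hj2]
          simp only [zrFactor, hv]
    have hμ : zrMu p z' = r * zrMu p z := by
      have e1 : zrMu p z' = ∏' j, zrFactor p z' j := rfl
      rw [e1]
      rw [show (fun j => zrFactor p z' j) = zrFactor p z' from rfl, hfun]
      rw [hH.2, hG.2]
      rw [← mul_assoc, ← zpow_add₀ hrne, show -(k : ℤ) + ((k : ℤ) + 1) = 1 by ring, zpow_one]
      rfl
    rw [hμ, ← mul_assoc, hqr]
  · intro hz0
    set z'' := Function.update z 0 (z 0 - 1) with hz''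
    have hsupp : (Function.support z'').Finite := by
      apply (hz.union (Set.finite_singleton 0)).subset
      intro j hj
      simp only [Set.mem_union, Set.mem_singleton_iff, Function.mem_support]
      rcases eq_or_ne j 0 with rfl | h1
      · tauto
      · left
        have : z'' j = z j := by rw [hz'', Function.update_of_ne h1]
        rwa [Function.mem_support, this] at hj
    refine ⟨hsupp, ?_⟩
    have hG := tprod_update_mul hF 0 r
    have hfun : zrFactor p z'' = Function.update (zrFactor p z) 0 (r * zrFactor p z 0) := by
      funext j
      rcases eq_or_ne j 0 with h | hj
      · rw [h, Function.update_self]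
        have hv : z'' 0 = z 0 - 1 := by rw [hz'', Function.update_self]
        simp only [zrFactor, hv, ← hrdef]
        rw [show ((z 0 - 1 : ℕ) : ℤ) = (z 0 : ℤ) - 1 by omega]
        rw [show (-((0 : ℕ) : ℤ) - 1) * ((z 0 : ℤ) - 1)
            = 1 + (-((0 : ℕ) : ℤ) - 1) * (z 0 : ℤ) by push_cast; ring, zpow_add₀ hrne, zpow_one]
        ring
      · rw [Function.update_of_ne hj]
        have hv : z'' j = z j := by rw [hz'', Function.update_of_ne hj]
        simp only [zrFactor, hv]
    have hμ : zrMu p z'' = r * zrMu p z := by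
      have e1 : zrMu p z'' = ∏' j, zrFactor p z'' j := rfl
      rw [e1, show (fun j => zrFactor p z'' j) = zrFactor p z'' from rfl, hfun, hG.2]
      rfl
    rw [hμ, ← mul_assoc, hqr]
end
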